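/- Let q be a prime power with q-1 = 4k + R, R ∈ {1,...,5}, k ≥ 1. In H_q there is no mixed cycle of length 3: in particular, for any part L_b and any point vertex v, v is edge-adjacent to at most one vertex of L_b, so v together with two arc-adjacent lines of L_b cannot form a 3-cycle; and there is no cycle using two arcs and one edge since the two endpoints of an edge lie in different parts while arcs stay within one part. -/
import Mathlib


open Sum

/-- Vertices of `H_q` (= vertices of `G_q`): points `(x,y)` with `x ∈ F*`, points `P_m`,
lines `[m,b]` with `m ∈ F*`, and lines `L_x`. -/
abbrev Vtx (F : Type) [Field F] : Type := (Fˣ × F ⊕ Fˣ) ⊕ (Fˣ × F ⊕ Fˣ)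

/-- Edges of `G_q ⊆ H_q`: `(x,y) ~ [m,b]` iff `y = m x + b`; `(x,y) ~ L_x`;
`[m,b] ~ P_m`. -/
def HEdge {F : Type} [Field F] : Vtx F → Vtx F → Prop
  | inl (inl (x, y)), inr (inl (m, b)) => y = (m : F) * x + b
  | inr (inl (m, b)), inl (inl (x, y)) => y = (m : F) * x + b
  | inl (inl (x, _)), inr (inr x') => x = x'
  | inr (inr x'), inl (inl (x, _)) => x = x'
  | inl (inr m), inr (inl (m', _)) => m = m'
  | inr (inl (m', _)), inl (inr m) => m = m'
  | _, _ => False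

/-- Arcs of `H_q`, given a primitive element `ξ` and jumps `i ∈ {1,…,k}`:
`((x,y),(xξ^i,y))`, `(L_x, L_{xξ^i})`, `([m,b],[m/ξ^i,b])`, `(P_m, P_{m/ξ^i})`. -/
def HArc {F : Type} [Field F] (ξ : Fˣ) (k : ℕ) : Vtx F → Vtx F → Prop
  | inl (inl (x, y)), inl (inl (x', y')) =>
      y = y' ∧ ∃ i : ℕ, 1 ≤ i ∧ i ≤ k ∧ x' = x * ξ ^ i
  | inr (inr x), inr (inr x') => ∃ i : ℕ, 1 ≤ i ∧ i ≤ k ∧ x' = x * ξ ^ i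
  | inr (inl (m, b)), inr (inl (m', b')) =>
      b = b' ∧ ∃ i : ℕ, 1 ≤ i ∧ i ≤ k ∧ m' = m * (ξ ^ i)⁻¹
  | inl (inr m), inl (inr m') => ∃ i : ℕ, 1 ≤ i ∧ i ≤ k ∧ m' = m * (ξ ^ i)⁻¹
  | _, _ => False

/-- A mixed cycle of length `ℓ` in `H_q`: an injective cyclic sequence of vertices where
each step is an arc (traversed forwards) or an edge; a closed walk of length 2 using the
same edge twice is not a cycle. -/
def IsMixedCycle {F : Type} [Field F] (ξ : Fˣ) (k ℓ : ℕ) (f : ZMod ℓ → Vtx F) : Prop :=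
  Function.Injective f ∧
    ∃ s : ZMod ℓ → Bool,
      (∀ t : ZMod ℓ, if s t then HArc ξ k (f t) (f (t + 1)) else HEdge (f t) (f (t + 1))) ∧
      (ℓ = 2 → s 0 = true ∨ s 1 = true)

/-- `H_q` has no mixed cycle of length 3. -/
theorem Hq_no_three_cycle (q k R : ℕ) (hq : IsPrimePow q) (hq7 : 7 ≤ q)
    (F : Type) [Field F] [Fintype F] (hcard : Fintype.card F = q)
    (ξ : Fˣ) (hξ : ∀ a : Fˣ, a ∈ Subgroup.zpowers ξ)
    (hk : 1 ≤ k) (hR1 : 1 ≤ R) (hR5 : R ≤ 5) (hqk : q - 1 = 4 * k + R) :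
    ∀ f : ZMod 3 → Vtx F, ¬ IsMixedCycle ξ k 3 f := by
  rintro f ⟨hinj, s, hstep, -⟩
  have hord : orderOf ξ = q - 1 := by
    rw [orderOf_eq_card_of_forall_mem_zpowers hξ, Nat.card_units, Nat.card_eq_fintype_card, hcard]
  have hne : ∀ i : ℕ, 1 ≤ i → i ≤ 3 * k → ξ ^ i ≠ 1 := by
    intro i hi1 hi3 h
    have hd := orderOf_dvd_of_pow_eq_one h
    have := Nat.le_of_dvd (by omega) hd
    omega
  have canc : ∀ a c : Fˣ, a = a * c → c = 1 := by
    intro a c h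
    have h' : a * 1 = a * c := by rw [mul_one]; exact h
    exact (mul_left_cancel h').symm
  have aff : ∀ (n x x' : Fˣ) (y b : F), y = ↑n * ↑x + b → y = ↑n * ↑x' + b → x = x' := by
    intro n x x' y b hA hB
    have h1 : (n : F) * x = n * x' := add_right_cancel (hA.symm.trans hB)
    exact Units.ext (mul_left_cancel₀ n.ne_zero h1)
  have aff2 : ∀ (n n' x : Fˣ) (y b : F), y = ↑n * ↑x + b → y = ↑n' * ↑x + b → n = n' := by
    intro n n' x y b hA hB
    have h1 : (n : F) * x = n' * x := add_right_cancel (hA.symm.trans hB)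
    exact Units.ext (mul_right_cancel₀ x.ne_zero h1)
  have one : ∀ (a b : Fˣ) (i : ℕ), 1 ≤ i → i ≤ k → b = a * ξ ^ i → a = b → False :=
    fun a b i hi1 hik hb hab => hne i hi1 (by omega) (canc a _ (hab.trans hb))
  have one' : ∀ (a b : Fˣ) (i : ℕ), 1 ≤ i → i ≤ k → b = a * (ξ ^ i)⁻¹ → a = b → False :=
    fun a b i hi1 hik hb hab =>
      hne i hi1 (by omega) (inv_eq_one.mp (canc a _ (hab.trans hb)))
  have tri : ∀ (a b c : Fˣ) (i j l : ℕ), 1 ≤ i → i ≤ k → 1 ≤ j → j ≤ k → 1 ≤ l → l ≤ k →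
      b = a * ξ ^ i → c = b * ξ ^ j → a = c * ξ ^ l → False := by
    intro a b c i j l hi1 hik hj1 hjk hl1 hlk hb hc ha
    apply hne (i + j + l) (by omega) (by omega)
    have key : a = a * (ξ ^ i * ξ ^ j * ξ ^ l) := by
      calc a = c * ξ ^ l := ha
        _ = b * ξ ^ j * ξ ^ l := by rw [hc]
        _ = a * ξ ^ i * ξ ^ j * ξ ^ l := by rw [hb]
        _ = a * (ξ ^ i * ξ ^ j * ξ ^ l) := by group
    rw [pow_add, pow_add]
    exact canc _ _ key
  have tri' : ∀ (a b c : Fˣ) (i j l : ℕ), 1 ≤ i → i ≤ k → 1 ≤ j → j ≤ k → 1 ≤ l → l ≤ k →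
      b = a * (ξ ^ i)⁻¹ → c = b * (ξ ^ j)⁻¹ → a = c * (ξ ^ l)⁻¹ → False := by
    intro a b c i j l hi1 hik hj1 hjk hl1 hlk hb hc ha
    apply hne (i + j + l) (by omega) (by omega)
    have key : a = a * ((ξ ^ i)⁻¹ * (ξ ^ j)⁻¹ * (ξ ^ l)⁻¹) := by
      calc a = c * (ξ ^ l)⁻¹ := ha
        _ = b * (ξ ^ j)⁻¹ * (ξ ^ l)⁻¹ := by rw [hc]
        _ = a * (ξ ^ i)⁻¹ * (ξ ^ j)⁻¹ * (ξ ^ l)⁻¹ := by rw [hb]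
        _ = a * ((ξ ^ i)⁻¹ * (ξ ^ j)⁻¹ * (ξ ^ l)⁻¹) := by group
    have hinv : (ξ ^ (i + j + l))⁻¹ = 1 := by
      rw [pow_add, pow_add, mul_inv, mul_inv]
      exact canc _ _ key
    exact inv_eq_one.mp hinv
  have ios : ∀ {b : Bool} {P Q : Prop}, (if b then P else Q) → P ∨ Q := by
    intro b P Q h
    cases b
    · exact Or.inr (by simpa using h)
    · exact Or.inl (by simpa using h)
  have h0 := ios (hstep 0); have h1 := ios (hstep 1); have h2 := ios (hstep 2)
  have e01 : (0 : ZMod 3) + 1 = 1 := by decide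
  have e12 : (1 : ZMod 3) + 1 = 2 := by decide
  have e20 : (2 : ZMod 3) + 1 = 0 := by decide
  rw [e01] at h0; rw [e12] at h1; rw [e20] at h2
  rcases hv0 : f 0 with (⟨x0, y0⟩ | m0) | (⟨n0, b0⟩ | z0) <;>
  rcases hv1 : f 1 with (⟨x1, y1⟩ | m1) | (⟨n1, b1⟩ | z1) <;>
  rcases hv2 : f 2 with (⟨x2, y2⟩ | m2) | (⟨n2, b2⟩ | z2) <;>
    rw [hv0, hv1] at h0 <;> rw [hv1, hv2] at h1 <;> rw [hv2, hv0] at h2 <;>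
    simp only [HArc, HEdge, or_false, false_or, or_self] at h0 h1 h2
  · obtain ⟨-, i, hi1, hik, ha⟩ := h0
    obtain ⟨-, j, hj1, hjk, hb⟩ := h1
    obtain ⟨-, l, hl1, hlk, hc⟩ := h2
    exact tri x0 x1 x2 i j l hi1 hik hj1 hjk hl1 hlk ha hb hc
  · obtain ⟨hy, i, hi1, hik, hx⟩ := h0
    exact one x0 x1 i hi1 hik hx (aff n2 x0 x1 y0 b2 h2 (by rw [hy]; exact h1))
  · obtain ⟨-, i, hi1, hik, hx⟩ := h0
    exact one x0 x1 i hi1 hik hx (h2.trans h1.symm)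
  · obtain ⟨hy, i, hi1, hik, hx⟩ := h2
    exact one x2 x0 i hi1 hik hx (aff n1 x2 x0 y2 b1 h1 (by rw [hy]; exact h0))
  · obtain ⟨hb, i, hi1, hik, hn⟩ := h1
    rw [hb] at h0
    exact one' n1 n2 i hi1 hik hn (aff2 n1 n2 x0 y0 b2 h0 h2)
  · obtain ⟨-, i, hi1, hik, hx⟩ := h2
    exact one x2 x0 i hi1 hik hx (h1.trans h0.symm)
  · obtain ⟨i, hi1, hik, hz⟩ := h1
    exact one z1 z2 i hi1 hik hz (h0.symm.trans h2)
  · obtain ⟨i, hi1, hik, ha⟩ := h0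
    obtain ⟨j, hj1, hjk, hb⟩ := h1
    obtain ⟨l, hl1, hlk, hc⟩ := h2
    exact tri' m0 m1 m2 i j l hi1 hik hj1 hjk hl1 hlk ha hb hc
  · obtain ⟨i, hi1, hik, hm⟩ := h0
    exact one' m0 m1 i hi1 hik hm (h2.trans h1.symm)
  · obtain ⟨i, hi1, hik, hm⟩ := h2
    exact one' m2 m0 i hi1 hik hm (h1.trans h0.symm)
  · obtain ⟨hb, i, hi1, hik, hn⟩ := h1
    exact one' n1 n2 i hi1 hik hn (h0.symm.trans h2)
  · obtain ⟨hy, i, hi1, hik, hx⟩ := h1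
    exact one x1 x2 i hi1 hik hx (aff n0 x1 x2 y1 b0 h0 (by rw [hy]; exact h2))
  · obtain ⟨hb, i, hi1, hik, hn⟩ := h2
    rw [hb] at h1
    exact one' n2 n0 i hi1 hik hn (aff2 n2 n0 x1 y1 b0 h1 h0)
  · obtain ⟨i, hi1, hik, hm⟩ := h1
    exact one' m1 m2 i hi1 hik hm (h0.trans h2.symm)
  · obtain ⟨hb, i, hi1, hik, hn⟩ := h2
    exact one' n2 n0 i hi1 hik hn (h1.symm.trans h0)
  · obtain ⟨hb, i, hi1, hik, hn⟩ := h0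
    rw [hb] at h2
    exact one' n0 n1 i hi1 hik hn (aff2 n0 n1 x2 y2 b1 h2 h1)
  · obtain ⟨hb, i, hi1, hik, hn⟩ := h0
    exact one' n0 n1 i hi1 hik hn (h2.symm.trans h1)
  · obtain ⟨-, i, hi1, hik, ha⟩ := h0
    obtain ⟨-, j, hj1, hjk, hb⟩ := h1
    obtain ⟨-, l, hl1, hlk, hc⟩ := h2
    exact tri' n0 n1 n2 i j l hi1 hik hj1 hjk hl1 hlk ha hb hc
  · obtain ⟨hy, i, hi1, hik, hx⟩ := h1
    exact one x1 x2 i hi1 hik hx (h0.trans h2.symm)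
  · obtain ⟨i, hi1, hik, hz⟩ := h2
    exact one z2 z0 i hi1 hik hz (h1.symm.trans h0)
  · obtain ⟨i, hi1, hik, hz⟩ := h0
    exact one z0 z1 i hi1 hik hz (h2.symm.trans h1)
  · obtain ⟨i, hi1, hik, ha⟩ := h0
    obtain ⟨j, hj1, hjk, hb⟩ := h1
    obtain ⟨l, hl1, hlk, hc⟩ := h2
    exact tri z0 z1 z2 i j l hi1 hik hj1 hjk hl1 hlk ha hb hc
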